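/- For a Markov chain (x_1, ..., x_{2^k+1}), the conditional density of the interior points given the endpoints factorizes as p(x_2, ..., x_{2^k} | x_1, x_{2^k+1}) = ∏_{i=2}^{2^k} p(x_i | x_{i−f(i)}, x_{i+f(i)}), where f(i) = max{j ∈ ℕ : (i-1) mod 2^j = 0}. -/

import Mathlib

open Finset


/-- The gap `2^(f i)` where `f i = max {j : (i-1) mod 2^j = 0}` is the largest power of two
dividing `i - 1`; the midpoint `x_i` is conditioned on `x_{i - 2^(f i)}` and `x_{i + 2^(f i)}`. -/
def dyadicGap (i : ℕ) : ℕ := 2 ^ ((i - 1).factorization 2)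

lemma fact_add (k m : ℕ) (h1 : 1 ≤ m) (h2 : m < 2^k) :
    (2^k + m).factorization 2 = m.factorization 2 := by
  have hm : m ≠ 0 := by omega
  have hnz : 2^k + m ≠ 0 := by positivity
  have hdv : 2 ^ (m.factorization 2) ∣ m := Nat.ordProj_dvd m 2
  have hvk : m.factorization 2 < k := by
    have := Nat.le_of_dvd (by omega) hdv
    by_contra h
    push_neg at h
    have : 2^k ≤ 2^(m.factorization 2) := Nat.pow_le_pow_right (by norm_num) h
    omega
  apply le_antisymm
  · have hw : 2 ^ ((2^k+m).factorization 2) ∣ 2^k + m := Nat.ordProj_dvd _ 2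
    have hwk : (2^k+m).factorization 2 ≤ k := by
      by_contra h
      push_neg at h
      have h1' : 2^(k+1) ≤ 2^((2^k+m).factorization 2) := Nat.pow_le_pow_right (by norm_num) h
      have h2' := Nat.le_of_dvd (by omega) hw
      have : 2^(k+1) = 2*2^k := by ring
      omega
    have : 2 ^ ((2^k+m).factorization 2) ∣ m := by
      have h2k : 2 ^ ((2^k+m).factorization 2) ∣ 2^k := pow_dvd_pow 2 hwk
      exact (Nat.dvd_add_right h2k).mp hw
    exact (Nat.Prime.pow_dvd_iff_le_factorization Nat.prime_two hm).mp this
  · have : 2 ^ (m.factorization 2) ∣ 2^k + m :=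
      Dvd.dvd.add (pow_dvd_pow 2 hvk.le) hdv
    exact (Nat.Prime.pow_dvd_iff_le_factorization Nat.prime_two hnz).mp this

lemma gap_shift (k j : ℕ) (h1 : 2 ≤ j) (h2 : j ≤ 2^k) : dyadicGap (2^k + j) = dyadicGap j := by
  unfold dyadicGap
  have : 2^k + j - 1 = 2^k + (j-1) := by omega
  rw [this, fact_add k (j-1) (by omega) (by omega)]

lemma gap_mid (k : ℕ) : dyadicGap (2^k + 1) = 2^k := by
  unfold dyadicGap
  simp [Nat.Prime.factorization_pow, Nat.prime_two]

lemma key (f : ℕ → ℕ → ℝ) (hf : ∀ a b, 0 < f a b) (k : ℕ) : ∀ s : ℕ,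
    ∏ i ∈ Icc 2 (2^k), (f (s + i - dyadicGap i) (s + i) * f (s + i) (s + i + dyadicGap i)
        / f (s + i - dyadicGap i) (s + i + dyadicGap i))
      = (∏ i ∈ Icc 1 (2^k), f (s + i) (s + i + 1)) / f (s + 1) (s + 2^k + 1) := by
  induction k with
  | zero => intro s; simp [div_self (hf (s+1) (s+1+1)).ne']
  | succ k ih =>
    intro s
    have h2k : (1:ℕ) ≤ 2^k := Nat.one_le_two_pow
    have hsplitL : (2:ℕ)^(k+1) = 2^k + 2^k := by ring
    have e1 : Icc 2 (2^(k+1)) = Ioc 1 (2^(k+1)) := by rw [← Finset.Icc_add_one_left_eq_Ioc]; rfl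
    have e2 : Icc 2 (2^k) = Ioc 1 (2^k) := by rw [← Finset.Icc_add_one_left_eq_Ioc]; rfl
    have e3 : Icc 1 (2^(k+1)) = Ioc 0 (2^(k+1)) := by rw [← Finset.Icc_add_one_left_eq_Ioc]; rfl
    have e4 : Icc 1 (2^k) = Ioc 0 (2^k) := by rw [← Finset.Icc_add_one_left_eq_Ioc]; rfl
    set G := fun i => f (s + i - dyadicGap i) (s + i) * f (s + i) (s + i + dyadicGap i)
        / f (s + i - dyadicGap i) (s + i + dyadicGap i) with hG
    have splitG : ∏ i ∈ Ioc 1 (2^(k+1)), G i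
        = (∏ i ∈ Ioc 1 (2^k), G i) * G (2^k + 1) * ∏ i ∈ Ioc (2^k+1) (2^(k+1)), G i := by
      rw [← Finset.prod_Ioc_consecutive _ (by omega : (1:ℕ) ≤ 2^k + 1) (by omega : 2^k+1 ≤ 2^(k+1)),
        ← Finset.prod_Ioc_succ_top (by omega : (1:ℕ) ≤ 2^k)]
    have hmap1 : Finset.map (addLeftEmbedding (2^k)) (Ioc 1 (2^k)) = Ioc (2^k+1) (2^(k+1)) := by
      rw [Finset.map_add_left_Ioc]; congr 1; omega
    have reG : ∏ i ∈ Ioc (2^k+1) (2^(k+1)), G i = ∏ j ∈ Ioc 1 (2^k), G (2^k + j) := by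
      rw [← hmap1, Finset.prod_map]
      apply Finset.prod_congr rfl
      intro j _
      simp [addLeftEmbedding_apply]
    have shiftedG : ∀ j ∈ Ioc 1 (2^k), G (2^k + j)
        = f ((s + 2^k) + j - dyadicGap j) ((s + 2^k) + j) * f ((s + 2^k) + j) ((s + 2^k) + j + dyadicGap j)
          / f ((s + 2^k) + j - dyadicGap j) ((s + 2^k) + j + dyadicGap j) := by
      intro j hj
      simp only [Finset.mem_Ioc] at hj
      have hg := gap_shift k j (by omega) hj.2
      simp only [hG, hg]
      have h1 : s + (2^k + j) = (s + 2^k) + j := by ring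
      rw [h1]
    set F := fun (s : ℕ) (i : ℕ) => f (s + i) (s + i + 1) with hF
    have hmap2 : Finset.map (addLeftEmbedding (2^k)) (Ioc 0 (2^k)) = Ioc (2^k) (2^(k+1)) := by
      rw [Finset.map_add_left_Ioc]; congr 1; omega
    have splitF : ∏ i ∈ Ioc 0 (2^(k+1)), F s i
        = (∏ i ∈ Ioc 0 (2^k), F s i) * ∏ i ∈ Ioc 0 (2^k), F (s + 2^k) i := by
      rw [← Finset.prod_Ioc_consecutive _ (by omega : (0:ℕ) ≤ 2^k) (by omega : 2^k ≤ 2^(k+1))]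
      congr 1
      rw [← hmap2, Finset.prod_map]
      apply Finset.prod_congr rfl
      intro j _
      simp only [hF, addLeftEmbedding_apply]
      rw [show s + (2^k+j) = s + 2^k + j by ring]
    rw [e1, e3, splitG, reG]
    rw [Finset.prod_congr rfl shiftedG]
    have ihl := ih s
    have ihr := ih (s + 2^k)
    rw [e2, e4] at ihl ihr
    rw [ihl, ihr, splitF]
    have hGmid : G (2^k + 1) = f (s + 1) (s + 2^k + 1) * f (s + 2^k + 1) (s + 2^(k+1) + 1)
        / f (s + 1) (s + 2^(k+1) + 1) := by
      simp only [hG, gap_mid k]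
      have a1 : s + (2^k+1) - 2^k = s + 1 := by omega
      have a3 : s + (2^k+1) + 2^k = s + 2^(k+1) + 1 := by omega
      have a2 : s + (2^k+1) = s + 2^k + 1 := by omega
      rw [a1, a3, a2]
    rw [hGmid]
    have harr1 : s + 2^k + 2^k + 1 = s + 2^(k+1) + 1 := by rw [hsplitL]; ring
    simp only [hF, harr1]
    have p1 := hf (s+1) (s+2^k+1)
    have p2 := hf (s+2^k+1) (s+2^(k+1)+1)
    have p3 := hf (s+1) (s+2^(k+1)+1)
    field_simp


/-- For a Markov chain `(x_1, …, x_{2^k+1})` with positive transition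
densities `tr a b u v` (density of `x_b = v` given `x_a = u`), the conditional density of
the interior points given the two endpoints factorizes as
`p(x_2, …, x_{2^k} ∣ x_1, x_{2^k+1}) = ∏_{i=2}^{2^k} p(x_i ∣ x_{i−f(i)}, x_{i+f(i)})`. -/
theorem stmt_1 {E : Type*} (k : ℕ)
    (tr : ℕ → ℕ → E → E → ℝ)       -- tr a b u v = transition density of x_b = v given x_a = u
    (condInt : (ℕ → E) → ℝ)        -- conditional density of interior points given endpoints
    (cond : ℕ → ℕ → ℕ → E → E → E → ℝ)  -- cond a i b u v w = p(x_i = v ∣ x_a = u, x_b = w)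
    (hpos : ∀ a b u v, 0 < tr a b u v)
    -- Markov property: the conditional density of the interior given the endpoints is the
    -- product of one-step transition densities divided by the endpoint transition density
    (hMarkov : ∀ x, condInt x =
      (∏ i ∈ Icc 1 (2 ^ k), tr i (i + 1) (x i) (x (i + 1))) /
        tr 1 (2 ^ k + 1) (x 1) (x (2 ^ k + 1)))
    -- conditional density of a midpoint given two surrounding points (Markov bridge formula)
    (hcond : ∀ a i b u v w, cond a i b u v w = tr a i u v * tr i b v w / tr a b u w)
    (x : ℕ → E) :
    condInt x = ∏ i ∈ Icc 2 (2 ^ k),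
        cond (i - dyadicGap i) i (i + dyadicGap i)
          (x (i - dyadicGap i)) (x i) (x (i + dyadicGap i)) := by
  rw [hMarkov x]
  have hrw : ∀ i ∈ Icc 2 (2^k),
      cond (i - dyadicGap i) i (i + dyadicGap i) (x (i - dyadicGap i)) (x i) (x (i + dyadicGap i))
      = (fun a b => tr a b (x a) (x b)) (i - dyadicGap i) i
        * (fun a b => tr a b (x a) (x b)) i (i + dyadicGap i)
        / (fun a b => tr a b (x a) (x b)) (i - dyadicGap i) (i + dyadicGap i) := by
    intro i _
    rw [hcond]
  rw [Finset.prod_congr rfl hrw]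
  have := (key (fun a b => tr a b (x a) (x b)) (fun a b => hpos a b (x a) (x b)) k 0).symm
  simpa using this
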